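/- Let γ : [0,1] → ℝ² be injective and continuous, let t ∈ [0,1], suppose γ is differentiable at t with γ′(t) ≠ 0, and set p = γ(t) and v = γ′(t)/‖γ′(t)‖. Let (qₙ) be a sequence of points of γ([0,1]) with qₙ ≠ p for all n and qₙ → p. Then the unit secant vectors uₙ = (qₙ − p)/‖qₙ − p‖ satisfy min(‖uₙ − v‖, ‖uₙ + v‖) → 0 as n → ∞. -/
import Mathlib

noncomputable section

/-- The plane with the Euclidean norm. -/
abbrev E2 : Type := EuclideanSpace ℝ (Fin 2)

open Filter Topology

lemma unit_of_smul (c : ℝ) (hc : c ≠ 0) (w : E2) (hw : w ≠ 0) :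
    ‖c • w‖⁻¹ • (c • w) = (‖w‖⁻¹ • w) ∨ ‖c • w‖⁻¹ • (c • w) = -(‖w‖⁻¹ • w) := by
  have hwn : ‖w‖ ≠ 0 := norm_ne_zero_iff.mpr hw
  rcases hc.lt_or_gt with h | h
  · right
    rw [norm_smul, Real.norm_eq_abs, abs_of_neg h, smul_smul, ← neg_smul]
    congr 1
    field_simp
  · left
    rw [norm_smul, Real.norm_eq_abs, abs_of_pos h, smul_smul]
    congr 1
    field_simp

/-- The analytic ingredient of Theorem 4.5 of the paper: if `γ : [0,1] → ℝ²` is an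
injective continuous curve, differentiable at `t` (within `[0,1]`) with nonzero
derivative `d`, and `(qₙ)` is a sequence of points of the curve with `qₙ ≠ p := γ(t)`
and `qₙ → p`, then the unit secant vectors `uₙ = (qₙ − p)/‖qₙ − p‖` converge to the
tangent line at `p`: `min(‖uₙ − v‖, ‖uₙ + v‖) → 0`, where `v = d/‖d‖`. -/
theorem unit_secants_tend_to_tangent
    (γ : ℝ → E2)
    (hγinj : Set.InjOn γ (Set.Icc 0 1))
    (hγcont : ContinuousOn γ (Set.Icc 0 1))
    (t : ℝ) (ht : t ∈ Set.Icc (0 : ℝ) 1)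
    (d : E2) (hder : HasDerivWithinAt γ d (Set.Icc 0 1) t) (hd : d ≠ 0)
    (q : ℕ → E2)
    (hq : ∀ n, q n ∈ γ '' Set.Icc 0 1)
    (hqne : ∀ n, q n ≠ γ t)
    (hqlim : Filter.Tendsto q Filter.atTop (nhds (γ t))) :
    Filter.Tendsto
      (fun n : ℕ =>
        min ‖(‖q n - γ t‖⁻¹ • (q n - γ t)) - (‖d‖⁻¹ • d)‖
            ‖(‖q n - γ t‖⁻¹ • (q n - γ t)) + (‖d‖⁻¹ • d)‖)
      Filter.atTop (nhds 0) := by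
  -- choose parameters
  choose s hs hγs using hq
  have hsne : ∀ n, s n ≠ t := fun n h => hqne n (by rw [← hγs n, h])
  -- s n → t
  have hst : Tendsto s atTop (𝓝 t) := by
    apply tendsto_of_subseq_tendsto
    intro ns hns
    obtain ⟨a, ha, φ, hφ, hφlim⟩ :=
      (isCompact_Icc (a := (0:ℝ)) (b := 1)).tendsto_subseq (fun k => hs (ns k))
    refine ⟨φ, ?_⟩
    have hγa : Tendsto (fun k => γ (s (ns (φ k)))) atTop (𝓝 (γ a)) :=
      ((hγcont a ha).tendsto.comp (tendsto_nhdsWithin_of_tendsto_nhds_of_eventually_within _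
        hφlim (Eventually.of_forall fun k => hs (ns (φ k)))))
    have hγa' : Tendsto (fun k => γ (s (ns (φ k)))) atTop (𝓝 (γ t)) := by
      have : Tendsto (fun k => q (ns (φ k))) atTop (𝓝 (γ t)) :=
        hqlim.comp (hns.comp hφ.tendsto_atTop)
      simpa only [hγs] using this
    have : a = t := hγinj ha ht (tendsto_nhds_unique hγa hγa')
    rwa [this] at hφlim
  -- slope tendsto
  have hslope : Tendsto (fun n => slope γ t (s n)) atTop (𝓝 d) := by
    have h1 := hasDerivWithinAt_iff_tendsto_slope.mp hder
    refine h1.comp ?_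
    rw [tendsto_nhdsWithin_iff]
    exact ⟨hst, Eventually.of_forall fun n => ⟨hs n, hsne n⟩⟩
  have hF : Tendsto (fun n => ‖slope γ t (s n)‖⁻¹ • slope γ t (s n)) atTop
      (𝓝 (‖d‖⁻¹ • d)) := by
    have hc : ContinuousAt (fun x : E2 => ‖x‖⁻¹ • x) d :=
      (((continuous_norm.continuousAt).inv₀ (norm_ne_zero_iff.mpr hd)).smul continuousAt_id)
    exact hc.tendsto.comp hslope
  -- eventually slope ≠ 0
  have hne : ∀ᶠ n in atTop, slope γ t (s n) ≠ 0 :=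
    hslope (isOpen_compl_singleton.mem_nhds (by simpa using hd))
  -- squeeze
  apply squeeze_zero' (Eventually.of_forall fun n => le_min (norm_nonneg _) (norm_nonneg _))
    (g := fun n => ‖(‖slope γ t (s n)‖⁻¹ • slope γ t (s n)) - (‖d‖⁻¹ • d)‖)
  · filter_upwards [hne] with n hn
    have key : q n - γ t = (s n - t) • slope γ t (s n) := by
      rw [sub_smul_slope]; simp [hγs n]
    rw [key]
    rcases unit_of_smul (s n - t) (sub_ne_zero.mpr (hsne n)) _ hn with h | h
    · rw [h]; exact min_le_left _ _
    · rw [h]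
      exact (min_le_right _ _).trans (le_of_eq (by rw [neg_add_eq_sub, norm_sub_rev]))
  · exact tendsto_iff_norm_sub_tendsto_zero.mp hF
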